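/- Fix a system of positive coset-depending weights w. Let 𝒫^{cw} be the set of games c for which there exists P : S → ℝ with c_i(s) = w_i(s_{-i})·(P(s) − (1/k_i)·Σ_{x∈S_i} P(x, s_{-i})) for all i and s (the coset weighted pure potential games), and let 𝒩 be the set of non-strategic games. Then: (a) every element of 𝒫^{cw} is orthogonal to every element of 𝒩 with respect to ⟨c,c'⟩ = Σ_i Σ_s c_i(s)c'_i(s); and (b) the subspace 𝒢_P^{cw} of coset weighted potential games with respect to w equals the (orthogonal) direct sum 𝒫^{cw} ⊕ 𝒩. -/

import Mathlib

/-- `f : S → ℝ` depends only on the strategies of the players other than `i`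
(i.e. it is a function of `s_{-i}`). -/
def IndepOf {n : ℕ} {k : Fin n → ℕ} (i : Fin n) (f : (∀ j, Fin (k j)) → ℝ) : Prop :=
  ∀ (s : ∀ j, Fin (k j)) (x : Fin (k i)), f (Function.update s i x) = f s

/-- `P` is a coset weighted potential function for the game `c` with respect to the
coset-depending weights `w`. -/
def IsCWPotentialFn {n : ℕ} {k : Fin n → ℕ} (c w : Fin n → (∀ j, Fin (k j)) → ℝ)
    (P : (∀ j, Fin (k j)) → ℝ) : Prop :=
  ∀ (i : Fin n) (s : ∀ j, Fin (k j)) (x y : Fin (k i)),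
    c i (Function.update s i x) - c i (Function.update s i y)
      = w i s * (P (Function.update s i x) - P (Function.update s i y))

/-- `c` is a coset weighted potential game with respect to `w`. -/
def IsCWPG {n : ℕ} {k : Fin n → ℕ} (w c : Fin n → (∀ j, Fin (k j)) → ℝ) : Prop :=
  ∃ P, IsCWPotentialFn c w P

/-- `c` is a coset weighted pure potential game w.r.t. `w`:
`c_i(s) = w_i(s_{-i}) (P(s) − (1/k_i) Σ_{x ∈ S_i} P(x, s_{-i}))` for some `P`. -/
def IsCWPurePotential {n : ℕ} {k : Fin n → ℕ}
    (w c : Fin n → (∀ j, Fin (k j)) → ℝ) : Prop :=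
  ∃ P : (∀ j, Fin (k j)) → ℝ, ∀ (i : Fin n) (s : ∀ j, Fin (k j)),
    c i s = w i s * (P s - (1 / (k i : ℝ)) * ∑ x : Fin (k i), P (Function.update s i x))

/-- `c` is a non-strategic game. -/
def IsNonStrategic {n : ℕ} {k : Fin n → ℕ} (c : Fin n → (∀ j, Fin (k j)) → ℝ) : Prop :=
  ∀ (i : Fin n) (s : ∀ j, Fin (k j)) (x y : Fin (k i)),
    c i (Function.update s i x) = c i (Function.update s i y)

/-- The inner product `⟨c, c'⟩ = Σ_i Σ_s c_i(s) c'_i(s)` on the space of games. -/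
noncomputable def gameInner {n : ℕ} {k : Fin n → ℕ}
    (c c' : Fin n → (∀ j, Fin (k j)) → ℝ) : ℝ :=
  ∑ i : Fin n, ∑ s : ∀ j, Fin (k j), c i s * c' i s

/-- `c` is a coset weighted pure harmonic game w.r.t. `w`: it is orthogonal to every
coset weighted potential game w.r.t. `w`. -/
def IsCWPureHarmonic {n : ℕ} {k : Fin n → ℕ}
    (w c : Fin n → (∀ j, Fin (k j)) → ℝ) : Prop :=
  ∀ c' : Fin n → (∀ j, Fin (k j)) → ℝ, IsCWPG w c' → gameInner c c' = 0

lemma sum_update_eq {n : ℕ} {k : Fin n → ℕ} (i : Fin n)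
    (g : (∀ j, Fin (k j)) → ℝ) :
    ∑ s : ∀ j, Fin (k j), ∑ x : Fin (k i), g (Function.update s i x)
      = (k i : ℝ) * ∑ s : ∀ j, Fin (k j), g s := by
  let e : ((∀ j, Fin (k j)) × Fin (k i)) ≃ ((∀ j, Fin (k j)) × Fin (k i)) :=
    { toFun := fun p => (Function.update p.1 i p.2, p.1 i)
      invFun := fun p => (Function.update p.1 i p.2, p.1 i)
      left_inv := by
        intro p
        simp [Function.update_idem, Function.update_eq_self]
      right_inv := by
        intro p
        simp [Function.update_idem, Function.update_eq_self] }
  have key : ∑ p : (∀ j, Fin (k j)) × Fin (k i), g (Function.update p.1 i p.2)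
      = ∑ p : (∀ j, Fin (k j)) × Fin (k i), g p.1 :=
    Fintype.sum_equiv e _ _ (fun p => rfl)
  rw [Fintype.sum_prod_type] at key
  rw [key, Fintype.sum_prod_type]
  simp [Finset.mul_sum, mul_comm]

/-- **Decomposition of Section 3.2:** `𝒢_P^{cw} = 𝒫^{cw} ⊕ 𝒩`.
(a) Every coset weighted pure potential game is orthogonal to every non-strategic game;
(b) a game is a coset weighted potential game w.r.t. `w` iff it is the sum of a coset
weighted pure potential game and a non-strategic game. -/
theorem cwpg_eq_pure_potential_plus_nonstrategic (n : ℕ) (hn : 2 ≤ n) (k : Fin n → ℕ)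
    (hk : ∀ i, 2 ≤ k i) (w : Fin n → (∀ j, Fin (k j)) → ℝ)
    (hw : ∀ i s, 0 < w i s) (hwI : ∀ i, IndepOf i (w i)) :
    (∀ p q : Fin n → (∀ j, Fin (k j)) → ℝ,
        IsCWPurePotential w p → IsNonStrategic q → gameInner p q = 0) ∧
    (∀ c : Fin n → (∀ j, Fin (k j)) → ℝ,
        IsCWPG w c ↔ ∃ p q : Fin n → (∀ j, Fin (k j)) → ℝ,
          IsCWPurePotential w p ∧ IsNonStrategic q ∧ c = p + q) := by
  constructor
  · -- orthogonality
    rintro p q ⟨P, hP⟩ hq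
    unfold gameInner
    apply Finset.sum_eq_zero
    intro i _
    have hk0 : (k i : ℝ) ≠ 0 := by
      have := hk i; positivity
    have hq' : ∀ (s : ∀ j, Fin (k j)) (x : Fin (k i)),
        q i (Function.update s i x) = q i s := by
      intro s x
      have := hq i s x (s i)
      rwa [Function.update_eq_self] at this
    set h : (∀ j, Fin (k j)) → ℝ := fun s => w i s * q i s with hh
    have hkey : ∑ s : ∀ j, Fin (k j), ∑ x : Fin (k i), h s * P (Function.update s i x)
        = (k i : ℝ) * ∑ s : ∀ j, Fin (k j), h s * P s := by
      rw [← sum_update_eq i (fun t => h t * P t)]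
      refine Finset.sum_congr rfl fun s _ => Finset.sum_congr rfl fun x _ => ?_
      simp only [hh, hwI i s x, hq' s x]
    have hterm : ∀ s, p i s * q i s
        = h s * P s - (1 / (k i : ℝ)) * ∑ x : Fin (k i), h s * P (Function.update s i x) := by
      intro s
      rw [hP i s, ← Finset.mul_sum]
      simp only [hh]
      ring
    rw [Finset.sum_congr rfl (fun s _ => hterm s), Finset.sum_sub_distrib,
      ← Finset.mul_sum, hkey]
    field_simp
    ring
  · intro c
    constructor
    · rintro ⟨P, hP⟩
      set p : Fin n → (∀ j, Fin (k j)) → ℝ :=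
        fun i s => w i s * (P s - (1 / (k i : ℝ)) * ∑ x : Fin (k i), P (Function.update s i x))
        with hpdef
      refine ⟨p, c - p, ⟨P, fun i s => rfl⟩, ?_, by abel⟩
      intro i s x y
      have havg : ∀ z : Fin (k i),
          ∑ u : Fin (k i), P (Function.update (Function.update s i z) i u)
            = ∑ u : Fin (k i), P (Function.update s i u) :=
        fun z => Finset.sum_congr rfl fun u _ => by rw [Function.update_idem]
      simp only [Pi.sub_apply, hpdef, hwI i s x, hwI i s y, havg x, havg y]
      linear_combination hP i s x y
    · rintro ⟨p, q, ⟨P, hP⟩, hq, rfl⟩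
      refine ⟨P, fun i s x y => ?_⟩
      have havg : ∀ z : Fin (k i),
          ∑ u : Fin (k i), P (Function.update (Function.update s i z) i u)
            = ∑ u : Fin (k i), P (Function.update s i u) :=
        fun z => Finset.sum_congr rfl fun u _ => by rw [Function.update_idem]
      simp only [Pi.add_apply, hP i, hwI i s x, hwI i s y, havg x, havg y,
        hq i s x y]
      ring
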